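/- Let v, w ∈ ℍ be quaternions with w ≠ 0. Then conj(v) * i * v = conj(w) * i * w if and only if there exists θ ∈ ℝ such that v = (cos θ + sin θ • i) * w, where i is the quaternion unit i. -/

import Mathlib

/-- The quaternion unit `i`. -/
noncomputable def quatI : Quaternion ℝ := ⟨0, 1, 0, 0⟩

@[simp] lemma quatI_re : quatI.re = 0 := rfl
@[simp] lemma quatI_imI : quatI.imI = 1 := rfl
@[simp] lemma quatI_imJ : quatI.imJ = 0 := rfl
@[simp] lemma quatI_imK : quatI.imK = 0 := rfl

lemma exists_cos_sin (a b : ℝ) (h : a ^ 2 + b ^ 2 = 1) :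
    ∃ θ : ℝ, Real.cos θ = a ∧ Real.sin θ = b := by
  have ha1 : -1 ≤ a := by nlinarith [sq_nonneg b]
  have ha2 : a ≤ 1 := by nlinarith [sq_nonneg b]
  rcases le_or_gt 0 b with hb | hb
  · refine ⟨Real.arccos a, Real.cos_arccos ha1 ha2, ?_⟩
    rw [Real.sin_arccos]
    rw [show (1 : ℝ) - a ^ 2 = b ^ 2 by linarith]
    exact Real.sqrt_sq hb
  · refine ⟨-Real.arccos a, by rw [Real.cos_neg]; exact Real.cos_arccos ha1 ha2, ?_⟩
    rw [Real.sin_neg, Real.sin_arccos]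
    rw [show (1 : ℝ) - a ^ 2 = b ^ 2 by linarith]
    rw [show b ^ 2 = (-b) ^ 2 by ring, Real.sqrt_sq (neg_nonneg.mpr hb.le)]
    ring

/-- For quaternions `v, w` with `w ≠ 0`,
`conj(v) * i * v = conj(w) * i * w` iff `v = (cos θ + sin θ • i) * w` for some `θ ∈ ℝ`. -/
theorem conj_mul_i_mul_self_eq_iff_circle_orbit (v w : Quaternion ℝ) (hw : w ≠ 0) :
    star v * quatI * v = star w * quatI * w ↔
    ∃ θ : ℝ, v = ((Real.cos θ : Quaternion ℝ) + Real.sin θ • quatI) * w := by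
  constructor
  · intro h
    set z : Quaternion ℝ := v * w⁻¹ with hz
    have hvzw : v = z * w := by
      rw [hz, inv_mul_cancel_right₀ hw]
    -- reduce to star z * quatI * z = quatI
    have hws : star w ≠ 0 := star_ne_zero.mpr hw
    have key : star z * quatI * z = quatI := by
      have h' : star w * (star z * quatI * z) * w = star w * quatI * w := by
        rw [← h, hvzw]
        simp [StarMul.star_mul, mul_assoc]
      have h'' := mul_right_cancel₀ hw h'
      exact mul_left_cancel₀ hws h''
    -- normSq z = 1
    have hnz : Quaternion.normSq z = 1 := by
      have hI : Quaternion.normSq quatI = 1 := by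
        rw [Quaternion.normSq_def']; simp [quatI]
      have := congrArg Quaternion.normSq key
      rw [map_mul, map_mul, Quaternion.normSq_star, hI] at this
      have hpos : 0 ≤ Quaternion.normSq z := Quaternion.normSq_nonneg
      nlinarith
    -- z commutes with quatI
    have hcomm : quatI * z = z * quatI := by
      have h1 : z * (star z * quatI * z) = z * quatI := by rw [key]
      have h2 : z * star z = 1 := by
        rw [Quaternion.self_mul_star, hnz]
        norm_num
      calc quatI * z = (z * star z) * quatI * z := by rw [h2]; simp
        _ = z * (star z * quatI * z) := by simp [mul_assoc]
        _ = z * quatI := h1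
    -- components
    have hK : z.imK = 0 := by
      have := congrArg QuaternionAlgebra.imJ hcomm
      simp [Quaternion.imJ_mul] at this
      linarith
    have hJ : z.imJ = 0 := by
      have := congrArg QuaternionAlgebra.imK hcomm
      simp [Quaternion.imK_mul] at this
      linarith
    have hsum : z.re ^ 2 + z.imI ^ 2 = 1 := by
      have := hnz
      rw [Quaternion.normSq_def'] at this
      rw [hJ, hK] at this
      nlinarith
    obtain ⟨θ, hc, hs⟩ := exists_cos_sin z.re z.imI hsum
    refine ⟨θ, ?_⟩
    rw [hvzw]
    congr 1
    ext <;> simp [hc, hs, hJ, hK, Quaternion.re_smul, Quaternion.imJ_smul, Quaternion.imK_smul]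
  · rintro ⟨θ, rfl⟩
    have key : star ((Real.cos θ : Quaternion ℝ) + Real.sin θ • quatI) * quatI *
        ((Real.cos θ : Quaternion ℝ) + Real.sin θ • quatI) = quatI := by
      have hcs := Real.cos_sq_add_sin_sq θ
      ext <;> simp [Quaternion.re_mul, Quaternion.imI_mul, Quaternion.imJ_mul,
        Quaternion.imK_mul, Quaternion.re_smul, Quaternion.imJ_smul, Quaternion.imK_smul] <;> nlinarith
    calc star (((Real.cos θ : Quaternion ℝ) + Real.sin θ • quatI) * w) * quatI *
          (((Real.cos θ : Quaternion ℝ) + Real.sin θ • quatI) * w)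
        = star w * (star ((Real.cos θ : Quaternion ℝ) + Real.sin θ • quatI) * quatI *
          ((Real.cos θ : Quaternion ℝ) + Real.sin θ • quatI)) * w := by
          simp [StarMul.star_mul, mul_assoc]
      _ = star w * quatI * w := by rw [key]
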